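/- If φ: ℝⁿ → ℝ is of class C^k on all of ℝⁿ and positively homogeneous of degree k ≥ 0 (an integer), then φ is a polynomial of degree k (in fact a homogeneous polynomial of degree k). -/

import Mathlib

open Filter Topology

private lemma aux_iteratedDeriv_pow_mul :
    ∀ (k : ℕ) (c t : ℝ), iteratedDeriv k (fun s : ℝ => s ^ k * c) t = Nat.factorial k * c := by
  intro k
  induction k with
  | zero => simp
  | succ k ih =>
    intro c t
    rw [iteratedDeriv_succ']
    have hder : deriv (fun s : ℝ => s ^ (k + 1) * c) = fun s : ℝ => s ^ k * ((k + 1) * c) := by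
      funext s
      rw [deriv_mul_const (differentiableAt_pow _), deriv_pow_field]
      simp only [Nat.add_sub_cancel]
      push_cast
      ring
    rw [hder, ih ((k + 1) * c) t, Nat.factorial_succ]
    push_cast
    ring

/-- A function of class `C^k` on all of ℝⁿ that is positively homogeneous of degree `k`
is a homogeneous polynomial of degree `k`. -/
theorem homogeneous_Ck_is_polynomial {n k : ℕ} (φ : (Fin n → ℝ) → ℝ)
    (hφ : ContDiff ℝ k φ)
    (hhom : ∀ v : Fin n → ℝ, ∀ t : ℝ, 0 < t → φ (t • v) = t ^ k * φ v) :
    ∃ P : MvPolynomial (Fin n) ℝ, P.IsHomogeneous k ∧ ∀ v, φ v = MvPolynomial.eval v P := by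
  classical
  set M : ContinuousMultilinearMap ℝ (fun _ : Fin k => (Fin n → ℝ)) ℝ :=
    iteratedFDeriv ℝ k φ 0 with hMdef
  -- Step 1: k! * φ v = M (v, ..., v) for every v.
  have key : ∀ v : Fin n → ℝ, (Nat.factorial k : ℝ) * φ v = M (fun _ => v) := by
    intro v
    set L : ℝ →L[ℝ] (Fin n → ℝ) :=
      (ContinuousLinearMap.id ℝ ℝ).smulRight v with hLdef
    have hL : ∀ t : ℝ, L t = t • v := fun t => rfl
    have hg : ContDiff ℝ k (φ ∘ L) := hφ.comp L.contDiff
    -- on (0,∞) the iterated derivative equals k! * φ v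
    have h1 : ∀ t : ℝ, 0 < t → iteratedDeriv k (φ ∘ L) t = Nat.factorial k * φ v := by
      intro t ht
      have heq : (φ ∘ L) =ᶠ[𝓝 t] fun s : ℝ => s ^ k * φ v := by
        filter_upwards [eventually_gt_nhds ht] with s hs
        simpa [hL] using hhom v s hs
      rw [heq.iteratedDeriv_eq k, aux_iteratedDeriv_pow_mul k (φ v) t]
    -- by continuity this also holds at 0
    have hcont : Continuous (iteratedDeriv k (φ ∘ L)) :=
      hg.continuous_iteratedDeriv k le_rfl
    have h0 : iteratedDeriv k (φ ∘ L) 0 = Nat.factorial k * φ v := by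
      have ha : Tendsto (iteratedDeriv k (φ ∘ L)) (𝓝[>] (0 : ℝ))
          (𝓝 (iteratedDeriv k (φ ∘ L) 0)) :=
        (hcont.tendsto 0).mono_left nhdsWithin_le_nhds
      have hb : Tendsto (iteratedDeriv k (φ ∘ L)) (𝓝[>] (0 : ℝ)) (𝓝 ((Nat.factorial k : ℝ) * φ v)) := by
        apply Tendsto.congr' _ tendsto_const_nhds
        filter_upwards [self_mem_nhdsWithin] with t ht using (h1 t ht).symm
      exact tendsto_nhds_unique ha hb
    -- identify the iterated derivative at 0 with M applied to the diagonal
    rw [iteratedDeriv_eq_iteratedFDeriv,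
      L.iteratedFDeriv_comp_right hφ 0 le_rfl] at h0
    have hL0 : L (0 : ℝ) = 0 := by simp [hL]
    rw [hL0] at h0
    rw [← h0]
    simp [ContinuousMultilinearMap.compContinuousLinearMap_apply, hL]
    rfl
  -- Step 2: expand M on the diagonal as a polynomial.
  have expand : ∀ v : Fin n → ℝ,
      M (fun _ => v) = ∑ d : Fin k → Fin n,
        (∏ i, v (d i)) * M (fun i => (Pi.single (d i) 1 : Fin n → ℝ)) := by
    intro v
    have hv : (fun _ : Fin k => v) =
        fun _ : Fin k => ∑ j : Fin n, v j • (Pi.single j 1 : Fin n → ℝ) := by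
      funext i
      funext x
      simp [Pi.single_apply, Finset.sum_ite_eq']
    rw [hv]
    rw [M.map_sum (g := fun _ (j : Fin n) => v j • (Pi.single j 1 : Fin n → ℝ))]
    refine Finset.sum_congr rfl fun d _ => ?_
    rw [M.map_smul_univ]
    rfl
  -- Step 3: build the polynomial.
  refine ⟨∑ d : Fin k → Fin n,
    MvPolynomial.C ((Nat.factorial k : ℝ)⁻¹ * M (fun i => (Pi.single (d i) 1 : Fin n → ℝ))) *
      ∏ i, MvPolynomial.X (d i), ?_, ?_⟩
  · apply MvPolynomial.IsHomogeneous.sum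
    intro d _
    have hprod : MvPolynomial.IsHomogeneous (∏ i : Fin k, MvPolynomial.X (d i) :
        MvPolynomial (Fin n) ℝ) k := by
      have := MvPolynomial.IsHomogeneous.prod Finset.univ
        (fun i : Fin k => (MvPolynomial.X (d i) : MvPolynomial (Fin n) ℝ))
        (fun _ => 1) (fun i _ => MvPolynomial.isHomogeneous_X ℝ (d i))
      simpa using this
    simpa using (MvPolynomial.isHomogeneous_C (Fin n)
      ((Nat.factorial k : ℝ)⁻¹ * M (fun i => (Pi.single (d i) 1 : Fin n → ℝ)))).mul hprod
  · intro v
    have hφv : φ v = (Nat.factorial k : ℝ)⁻¹ * M (fun _ => v) := by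
      have hk : (Nat.factorial k : ℝ) ≠ 0 := Nat.cast_ne_zero.mpr (Nat.factorial_ne_zero k)
      field_simp [← key v]
      linarith [key v]
    rw [hφv, expand v, map_sum, Finset.mul_sum]
    refine Finset.sum_congr rfl fun d _ => ?_
    simp [MvPolynomial.eval_prod]
    ring
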